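/- Let G be a finite simple graph on n vertices. The number of isomorphism classes of graphs Seidel complement equivalent to G is at most n + 1; more precisely, every graph Seidel complement equivalent to G is isomorphic to G or to G*v for some vertex v of G. -/

import Mathlib

universe u

/-- The Seidel complement of `G` at `v`: adjacency between the open neighborhood of `v`
and the set of vertices different from `v` and not adjacent to `v` is complemented,
all other adjacencies are unchanged. -/
def seidelCompl {V : Type u} (G : SimpleGraph V) (v : V) : SimpleGraph V where
  Adj x y := x ≠ y ∧
    Xor' (G.Adj x y)
      ((G.Adj v x ∧ ¬ G.Adj v y ∧ y ≠ v) ∨ (G.Adj v y ∧ ¬ G.Adj v x ∧ x ≠ v))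
  symm := ⟨by
    rintro x y ⟨hxy, h⟩
    refine ⟨hxy.symm, ?_⟩
    have h1 : G.Adj x y ↔ G.Adj y x := G.adj_comm x y
    unfold Xor' Xor at h ⊢
    tauto⟩
  loopless := ⟨fun x h => h.1 rfl⟩

/-- `G` and `H` are Seidel complement equivalent: some finite sequence of Seidel
complementations applied to `G` yields a graph isomorphic to `H`. -/
def SeidelEquiv {V W : Type u} (G : SimpleGraph V) (H : SimpleGraph W) : Prop :=
  ∃ l : List V, Nonempty ((l.foldl seidelCompl G) ≃g H)

lemma seidelCompl_adj {V : Type u} (G : SimpleGraph V) (v x y : V) :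
    (seidelCompl G v).Adj x y ↔ x ≠ y ∧
    Xor' (G.Adj x y)
      ((G.Adj v x ∧ ¬ G.Adj v y ∧ y ≠ v) ∨ (G.Adj v y ∧ ¬ G.Adj v x ∧ x ≠ v)) := Iff.rfl

set_option maxHeartbeats 2000000 in
lemma seidel_swap {V : Type u} [DecidableEq V] (G : SimpleGraph V) {u w : V} (huw : u ≠ w)
    (x y : V) :
    (seidelCompl (seidelCompl G u) w).Adj x y ↔
      (seidelCompl G w).Adj (Equiv.swap u w x) (Equiv.swap u w y) := by
  have hA : ¬ G.Adj u u := G.loopless.irrefl u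
  have hB : ¬ G.Adj w w := G.loopless.irrefl w
  by_cases hxu : x = u
  · rw [hxu, Equiv.swap_apply_left]
    by_cases hyu : y = u
    · rw [hyu, Equiv.swap_apply_left]
      simp [seidelCompl_adj]
    · by_cases hyw : y = w
      · rw [hyw, Equiv.swap_apply_right]
        simp only [seidelCompl_adj]
        by_cases a : G.Adj u w <;> simp_all [Xor', eq_comm, G.adj_comm]
      · rw [Equiv.swap_apply_of_ne_of_ne hyu hyw]
        simp only [seidelCompl_adj]
        by_cases a : G.Adj u w <;> by_cases c : G.Adj u y <;> by_cases e : G.Adj w y <;>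
          simp_all [Xor', eq_comm, G.adj_comm]
  · by_cases hxw : x = w
    · rw [hxw, Equiv.swap_apply_right]
      by_cases hyu : y = u
      · rw [hyu, Equiv.swap_apply_left]
        simp only [seidelCompl_adj]
        by_cases a : G.Adj u w <;> simp_all [Xor', eq_comm, G.adj_comm]
      · by_cases hyw : y = w
        · rw [hyw, Equiv.swap_apply_right]
          simp [seidelCompl_adj]
        · rw [Equiv.swap_apply_of_ne_of_ne hyu hyw]
          simp only [seidelCompl_adj]
          by_cases a : G.Adj u w <;> by_cases c : G.Adj u y <;> by_cases e : G.Adj w y <;>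
            simp_all [Xor', eq_comm, G.adj_comm]
    · rw [Equiv.swap_apply_of_ne_of_ne hxu hxw]
      by_cases hyu : y = u
      · rw [hyu, Equiv.swap_apply_left]
        simp only [seidelCompl_adj]
        by_cases a : G.Adj u w <;> by_cases b : G.Adj u x <;> by_cases d : G.Adj w x <;>
          simp_all [Xor', eq_comm, G.adj_comm]
      · by_cases hyw : y = w
        · rw [hyw, Equiv.swap_apply_right]
          simp only [seidelCompl_adj]
          by_cases a : G.Adj u w <;> by_cases b : G.Adj u x <;> by_cases d : G.Adj w x <;>
            simp_all [Xor', eq_comm, G.adj_comm]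
        · rw [Equiv.swap_apply_of_ne_of_ne hyu hyw]
          simp only [seidelCompl_adj]
          by_cases a : G.Adj u w <;> by_cases b : G.Adj u x <;> by_cases c : G.Adj u y <;>
            by_cases d : G.Adj w x <;> by_cases e : G.Adj w y <;> by_cases f : G.Adj x y <;>
            simp_all [Xor', eq_comm, G.adj_comm]

lemma seidel_invol {V : Type u} (G : SimpleGraph V) (v : V) :
    seidelCompl (seidelCompl G v) v = G := by
  ext x y
  simp only [seidelCompl_adj]
  have hvv : ¬ G.Adj v v := G.loopless.irrefl v
  have h1 : G.Adj x y → x ≠ y := G.ne_of_adj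
  by_cases hx : x = v <;> by_cases hy : y = v <;>
    by_cases a : G.Adj v x <;> by_cases b : G.Adj v y <;> by_cases c : G.Adj x y <;>
    simp_all [Xor', eq_comm]

/-- An isomorphism commutes with Seidel complementation. -/
def seidelIso {V W : Type u} {G : SimpleGraph V} {H : SimpleGraph W} (e : G ≃g H) (v : V) :
    seidelCompl G v ≃g seidelCompl H (e v) where
  toEquiv := e.toEquiv
  map_rel_iff' := by
    intro a b
    have h1 : ∀ p q : V, H.Adj (e.toEquiv p) (e.toEquiv q) ↔ G.Adj p q :=
      fun p q => e.map_adj_iff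
    have h2 : ∀ p q : V, (e.toEquiv p = e.toEquiv q) ↔ p = q :=
      fun p q => e.toEquiv.apply_eq_iff_eq
    show (seidelCompl H (e.toEquiv v)).Adj (e.toEquiv a) (e.toEquiv b) ↔ _
    simp only [seidelCompl_adj, h1, h2, Ne]

/-- The swap lemma packaged as an isomorphism. -/
noncomputable def seidelSwapIso {V : Type u} (G : SimpleGraph V) {u w : V} (huw : u ≠ w) :
    seidelCompl (seidelCompl G u) w ≃g seidelCompl G w := by
  classical
  exact
    { toEquiv := Equiv.swap u w,
      map_rel_iff' := fun {a b} => ((seidel_swap G huw a b).symm : _) }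

lemma seidel_key {V : Type u} (G : SimpleGraph V) (l : List V) :
    Nonempty ((l.foldl seidelCompl G) ≃g G) ∨
      ∃ v : V, Nonempty ((l.foldl seidelCompl G) ≃g seidelCompl G v) := by
  induction l using List.reverseRecOn with
  | nil => exact Or.inl ⟨RelIso.refl G.Adj⟩
  | append_singleton l w ih =>
    rw [List.foldl_append, List.foldl_cons, List.foldl_nil]
    rcases ih with ⟨⟨e⟩⟩ | ⟨v, ⟨e⟩⟩
    · exact Or.inr ⟨e w, ⟨seidelIso e w⟩⟩
    · by_cases h : e w = v
      · left
        refine ⟨(seidelIso e w).trans ?_⟩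
        rw [h, seidel_invol]
      · right
        refine ⟨e w, ⟨(seidelIso e w).trans ?_⟩⟩
        exact seidelSwapIso G (Ne.symm h)

/-- Every graph Seidel complement equivalent to `G` is isomorphic to `G` or to some `G*v`;
consequently there are at most `n + 1` isomorphism classes of graphs Seidel complement
equivalent to `G`. -/
theorem seidelEquiv_classes_card_le {V : Type u} [Fintype V] (G : SimpleGraph V) :
    (∀ (W : Type u) [Fintype W] (H : SimpleGraph W), SeidelEquiv G H →
      Nonempty (H ≃g G) ∨ ∃ v : V, Nonempty (H ≃g seidelCompl G v)) ∧
    ∃ S : Finset (SimpleGraph V), S.card ≤ Fintype.card V + 1 ∧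
      ∀ H : SimpleGraph V, SeidelEquiv G H → ∃ H' ∈ S, Nonempty (H ≃g H') := by
  classical
  have main : ∀ (W : Type u) [Fintype W] (H : SimpleGraph W), SeidelEquiv G H →
      Nonempty (H ≃g G) ∨ ∃ v : V, Nonempty (H ≃g seidelCompl G v) := by
    intro W _ H ⟨l, ⟨e⟩⟩
    rcases seidel_key G l with ⟨⟨f⟩⟩ | ⟨v, ⟨f⟩⟩
    · exact Or.inl ⟨e.symm.trans f⟩
    · exact Or.inr ⟨v, ⟨e.symm.trans f⟩⟩
  refine ⟨main, insert G ((Finset.univ : Finset V).image (seidelCompl G)), ?_, ?_⟩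
  · calc (insert G ((Finset.univ : Finset V).image (seidelCompl G))).card
        ≤ ((Finset.univ : Finset V).image (seidelCompl G)).card + 1 :=
          Finset.card_insert_le _ _
      _ ≤ Fintype.card V + 1 := by
          have := Finset.card_image_le (f := seidelCompl G) (s := (Finset.univ : Finset V))
          simpa using Nat.add_le_add_right (by simpa using this) 1
  · intro H hH
    rcases main V H hH with ⟨⟨e⟩⟩ | ⟨v, ⟨e⟩⟩
    · exact ⟨G, Finset.mem_insert_self _ _, ⟨e⟩⟩
    · exact ⟨seidelCompl G v,
        Finset.mem_insert_of_mem (Finset.mem_image_of_mem _ (Finset.mem_univ v)), ⟨e⟩⟩
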